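/- Let (E,A,B,Q,S,R) be a weighted system, let W, T ∈ ℂ^{n×n} be invertible and F ∈ ℂ^{m×n}, and define E_F := WET, A_F := W(A+BF)T, B_F := WB, Q_F := T^*(Q + SF + F^*S^* + F^*RF)T, S_F := T^*(S + F^*R), R_F := R, and 𝒯_F := [[T, 0],[FT, I_m]]. Let P ∈ ℂ^{n×n} be Hermitian and P_F := W^{−*} P W^{−1}. Then M_F(P_F) = 𝒯_F^* M(P) 𝒯_F, where M(·) and M_F(·) denote the KYP matrices of the weighted systems (E,A,B,Q,S,R) and (E_F,A_F,B_F,Q_F,S_F,R_F), respectively. -/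
import Mathlib


open Matrix Filter
open scoped ComplexOrder

set_option synthInstance.maxHeartbeats 1000000
set_option maxHeartbeats 1000000

noncomputable section

/-- The behavior of the implicit difference equation `E x_{j+1} = A x_j + B u_j`. -/
def IsBehavior {n m : ℕ} (E A : Matrix (Fin n) (Fin n) ℂ) (B : Matrix (Fin n) (Fin m) ℂ)
    (x : ℕ → Fin n → ℂ) (u : ℕ → Fin m → ℂ) : Prop :=
  ∀ j : ℕ, E *ᵥ x (j + 1) = A *ᵥ x j + B *ᵥ u j

/-- The system space: the smallest subspace of `ℂ^{n+m}` containing all stacked vectors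
`(x_j ; u_j)` of behavior trajectories. -/
def systemSpace {n m : ℕ} (E A : Matrix (Fin n) (Fin n) ℂ) (B : Matrix (Fin n) (Fin m) ℂ) :
    Submodule ℂ (Fin n ⊕ Fin m → ℂ) :=
  Submodule.span ℂ {v : Fin n ⊕ Fin m → ℂ |
    ∃ x u, IsBehavior E A B x u ∧ ∃ j : ℕ, v = Sum.elim (x j) (u j)}

/-- The pencil `zE - A` is regular: its determinant is not the zero polynomial. -/
def RegularPencil {n : ℕ} (E A : Matrix (Fin n) (Fin n) ℂ) : Prop :=
  ((Polynomial.X : Polynomial ℂ) • E.map ⇑(Polynomial.C (R := ℂ)) - A.map ⇑(Polynomial.C (R := ℂ))).det ≠ 0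

/-- The KYP matrix `M(P)`. -/
def kypM {n m : ℕ} (E A : Matrix (Fin n) (Fin n) ℂ) (B : Matrix (Fin n) (Fin m) ℂ)
    (Q : Matrix (Fin n) (Fin n) ℂ) (S : Matrix (Fin n) (Fin m) ℂ)
    (R : Matrix (Fin m) (Fin m) ℂ) (P : Matrix (Fin n) (Fin n) ℂ) :
    Matrix (Fin n ⊕ Fin m) (Fin n ⊕ Fin m) ℂ :=
  fromBlocks (Aᴴ * P * A - Eᴴ * P * E + Q) (Aᴴ * P * B + S)
    (Bᴴ * P * A + Sᴴ) (Bᴴ * P * B + R)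

/-- The Popov function evaluated at a point `z ∈ ℂ` with `det (zE - A) ≠ 0`. -/
def popovEval {n m : ℕ} (E A : Matrix (Fin n) (Fin n) ℂ) (B : Matrix (Fin n) (Fin m) ℂ)
    (Q : Matrix (Fin n) (Fin n) ℂ) (S : Matrix (Fin n) (Fin m) ℂ)
    (R : Matrix (Fin m) (Fin m) ℂ) (z : ℂ) : Matrix (Fin m) (Fin m) ℂ :=
  (fromRows ((z • E - A)⁻¹ * B) (1 : Matrix (Fin m) (Fin m) ℂ))ᴴ *
    fromBlocks Q S Sᴴ R * fromRows ((z • E - A)⁻¹ * B) 1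

/-- Interpret a complex matrix as a matrix of rational functions. -/
def mapRat {a b : Type} (M : Matrix a b ℂ) : Matrix a b (RatFunc ℂ) :=
  M.map ⇑(algebraMap ℂ (RatFunc ℂ))

/-- The Popov function as an `m × m` matrix over the field `ℂ(z)`. -/
def popov {n m : ℕ} (E A : Matrix (Fin n) (Fin n) ℂ) (B : Matrix (Fin n) (Fin m) ℂ)
    (Q : Matrix (Fin n) (Fin n) ℂ) (S : Matrix (Fin n) (Fin m) ℂ)
    (R : Matrix (Fin m) (Fin m) ℂ) : Matrix (Fin m) (Fin m) (RatFunc ℂ) :=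
  mapRat Bᴴ * ((RatFunc.X : RatFunc ℂ)⁻¹ • mapRat Eᴴ - mapRat Aᴴ)⁻¹ * mapRat Q *
      ((RatFunc.X : RatFunc ℂ) • mapRat E - mapRat A)⁻¹ * mapRat B +
    mapRat Bᴴ * ((RatFunc.X : RatFunc ℂ)⁻¹ • mapRat Eᴴ - mapRat Aᴴ)⁻¹ * mapRat S +
    mapRat Sᴴ * ((RatFunc.X : RatFunc ℂ) • mapRat E - mapRat A)⁻¹ * mapRat B +
    mapRat R

/-- A subspace `𝒴` is `N`-neutral if `x^* N y = 0` for all `x, y ∈ 𝒴`. -/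
def IsNeutral {k : Type} [Fintype k] (N : Matrix k k ℂ) (Y : Submodule ℂ (k → ℂ)) : Prop :=
  ∀ x ∈ Y, ∀ y ∈ Y, star x ⬝ᵥ (N *ᵥ y) = 0

/-- A subspace is maximally `N`-neutral if it is `N`-neutral and no strictly larger
subspace is `N`-neutral. -/
def IsMaxNeutral {k : Type} [Fintype k] (N : Matrix k k ℂ) (Y : Submodule ℂ (k → ℂ)) : Prop :=
  IsNeutral N Y ∧ ∀ W : Submodule ℂ (k → ℂ), Y < W → ¬ IsNeutral N W

/-- the KYP matrices of feedback equivalent weighted systems are congruent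
via `𝒯_F`. -/
theorem stmt_5 {n m : ℕ} (E A : Matrix (Fin n) (Fin n) ℂ) (B : Matrix (Fin n) (Fin m) ℂ)
    (Q : Matrix (Fin n) (Fin n) ℂ) (S : Matrix (Fin n) (Fin m) ℂ)
    (R : Matrix (Fin m) (Fin m) ℂ)
    (hreg : RegularPencil E A) (hQ : Q.IsHermitian) (hR : R.IsHermitian)
    (W T : Matrix (Fin n) (Fin n) ℂ) (F : Matrix (Fin m) (Fin n) ℂ)
    (hW : IsUnit W) (hT : IsUnit T)
    (P : Matrix (Fin n) (Fin n) ℂ) (hP : P.IsHermitian) :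
    kypM (W * E * T) (W * (A + B * F) * T) (W * B)
        (Tᴴ * (Q + S * F + Fᴴ * Sᴴ + Fᴴ * R * F) * T) (Tᴴ * (S + Fᴴ * R)) R
        ((W⁻¹)ᴴ * P * W⁻¹)
      = (fromBlocks T 0 (F * T) 1)ᴴ * kypM E A B Q S R P * fromBlocks T 0 (F * T) 1 := by

  have hdet : IsUnit W.det := (Matrix.isUnit_iff_isUnit_det W).mp hW
  have h1 : W⁻¹ * W = 1 := Matrix.nonsing_inv_mul W hdet
  have h2 : Wᴴ * (W⁻¹)ᴴ = 1 := by
    rw [← conjTranspose_mul, h1, conjTranspose_one]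
  have key : ∀ {a b : Type} [Fintype a] [Fintype b] (X : Matrix (Fin n) a ℂ)
      (Y : Matrix (Fin n) b ℂ),
      (W * X)ᴴ * ((W⁻¹)ᴴ * P * W⁻¹) * (W * Y) = Xᴴ * P * Y := by
    intro a b _ _ X Y
    rw [conjTranspose_mul]
    calc Xᴴ * Wᴴ * ((W⁻¹)ᴴ * P * W⁻¹) * (W * Y)
        = Xᴴ * ((Wᴴ * (W⁻¹)ᴴ) * P * (W⁻¹ * W)) * Y := by
          simp only [Matrix.mul_assoc]
      _ = Xᴴ * P * Y := by rw [h1, h2, Matrix.one_mul, Matrix.mul_one, Matrix.mul_assoc]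
  have e1 : W * E * T = W * (E * T) := by rw [Matrix.mul_assoc]
  have e2 : W * (A + B * F) * T = W * ((A + B * F) * T) := by rw [Matrix.mul_assoc]
  unfold kypM
  rw [e1, e2, fromBlocks_conjTranspose, fromBlocks_multiply, fromBlocks_multiply]
  simp only [key]
  refine fromBlocks_inj.mpr ⟨?_, ?_, ?_, ?_⟩ <;>
    · simp only [conjTranspose_mul, conjTranspose_add, conjTranspose_conjTranspose,
        hQ.eq, hR.eq, Matrix.mul_add, Matrix.add_mul, Matrix.mul_sub, Matrix.sub_mul,
        Matrix.mul_assoc, conjTranspose_zero, Matrix.zero_mul, Matrix.mul_zero,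
        add_zero, zero_add, Matrix.mul_one, Matrix.one_mul, conjTranspose_one]
      try abel
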